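/- Let u, v, w be points of the d-dimensional Euclidean space (EuclideanSpace ℝ (Fin d)) with w ≠ u, and suppose ‖u − w‖ < ‖u − v‖ and that w does not prune the pair (u,v), i.e., it is not the case that both ‖u − w‖ < ‖u − v‖ and ‖v − w‖ < ‖u − v‖ hold. Then the inner product satisfies ⟪v − u, w − u⟫ < (1/2)·‖v − u‖·‖w − u‖; that is, the angle between the edge directions v − u and w − u exceeds 60 degrees. This makes precise the claim that edges retained after RNG pruning have diversified directions: a candidate edge is pruned whenever there exists a strictly shorter retained edge pointing in a similar direction. -/
import Mathlib

/-- If `w` is strictly closer to `u` than `v` is but `w` does not prune the pair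
`(u,v)`, then the angle between the edge directions `v - u` and `w - u` exceeds
60 degrees: `⟪v - u, w - u⟫ < (1/2)·‖v - u‖·‖w - u‖`. -/
theorem rng_pruning_diversified_directions (d : ℕ)
    (u v w : EuclideanSpace ℝ (Fin d)) (hwu : w ≠ u)
    (hclose : ‖u - w‖ < ‖u - v‖)
    (hnotprune : ¬ (‖u - w‖ < ‖u - v‖ ∧ ‖v - w‖ < ‖u - v‖)) :
    @inner ℝ _ _ (v - u) (w - u) < (1 / 2 : ℝ) * ‖v - u‖ * ‖w - u‖ := by
  have hvw : ‖u - v‖ ≤ ‖v - w‖ := by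
    by_contra h
    exact hnotprune ⟨hclose, not_le.mp h⟩
  have hwu' : (0 : ℝ) < ‖w - u‖ := by
    simpa [norm_pos_iff, sub_eq_zero] using hwu
  have hlt : ‖w - u‖ < ‖v - u‖ := by
    rw [norm_sub_rev w u, norm_sub_rev v u]; exact hclose
  have key : 2 * (@inner ℝ _ _ (v - u) (w - u)) ≤ ‖w - u‖ ^ 2 := by
    have h1 : ‖v - u‖ ^ 2 ≤ ‖v - w‖ ^ 2 := by
      have := hvw
      rw [norm_sub_rev u v] at this
      exact pow_le_pow_left₀ (norm_nonneg _) this 2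
    have h2 : ‖v - w‖ ^ 2 = ‖v - u‖ ^ 2 - 2 * (@inner ℝ _ _ (v - u) (w - u)) + ‖w - u‖ ^ 2 := by
      have : v - w = (v - u) - (w - u) := by abel
      rw [this, @norm_sub_sq_real]
    linarith [h1, h2]
  have : @inner ℝ _ _ (v - u) (w - u) ≤ (1/2 : ℝ) * ‖w - u‖ * ‖w - u‖ := by
    nlinarith [key]
  nlinarith [this, hlt, hwu']
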